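/- Under the same framework as the previous statement, but with batch services: class-i customers depart in batches of fixed size K_i ≥ 1 (so under E^d_i, Y = K_i·e_i deterministically), and the departure-epoch rate satisfies λ^d_i·K_i = λ·E[G_i]. Then the generating-function balance equation becomes (1 − E[z^G])·L(z) = Σ_{i=1}^m ((1 − z_i^{K_i})/K_i)·E[G_i]·S^c_i(z). -/
import Mathlib


open Finset

/-- Theorem 5.2: batch services of fixed class sizes `K_i`; the balance equation
becomes `(1 - E[z^G])·L(z) = Σ_i ((1-z_i^{K_i})/K_i)·E[G_i]·S^c_i(z)`. -/
theorem stmt10 (m : ℕ) (lam : ℝ) (hlam : 0 < lam)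
    (z : Fin m → ℝ) (hz : ∀ j, |z j| ≤ 1)
    (Ghat Lz : ℝ) (EG : Fin m → ℝ) (lamd Sc : Fin m → ℝ)
    (K : Fin m → ℕ) (hK : ∀ i, 1 ≤ K i)
    (EeXY EeX : ℝ) (EdXY EdX : Fin m → ℝ)
    (hbal : lam * (EeXY - EeX) = ∑ i, lamd i * (EdXY i - EdX i))
    (hEeXY : EeXY = Ghat * Lz) (hEeX : EeX = Lz)
    (hEdXY : ∀ i, EdXY i = z i ^ (K i) * Sc i) (hEdX : ∀ i, EdX i = Sc i)
    (hrate : ∀ i, lamd i * (K i : ℝ) = lam * EG i) :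
    (1 - Ghat) * Lz = ∑ i, ((1 - z i ^ (K i)) / (K i : ℝ)) * EG i * Sc i := by
  subst hEeXY hEeX
  have h : ∀ i, lamd i * (EdXY i - EdX i) = lam * (-(((1 - z i ^ (K i)) / (K i : ℝ)) * EG i * Sc i)) := by
    intro i
    have hKpos : (0:ℝ) < (K i : ℝ) := by exact_mod_cast hK i
    have hl : lamd i = lam * EG i / (K i : ℝ) := by
      field_simp at hrate ⊢
      linarith [hrate i]
    rw [hEdXY, hEdX, hl]
    field_simp
    ring
  rw [Finset.sum_congr rfl (fun i _ => h i), ← Finset.mul_sum] at hbal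
  have := mul_left_cancel₀ (ne_of_gt hlam) hbal
  rw [Finset.sum_neg_distrib] at this
  linarith
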